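/- If a group G has no nontrivial R-invisible subgroup, then any R-nullhomologous system of equations over G has at most one solution in G. -/

import Mathlib

open scoped TensorProduct

/-- The set of denominators of (reduced fractional expressions of) elements of `R ⊆ ℚ`. -/
def DR (R : Subring ℚ) : Set ℕ := {d | ∃ q ∈ R, q.den = d}

variable {G H A : Type*} [Group G] [Group H] [Group A]

/-- Evaluation of a monomial over `G` in `n` indeterminates at a tuple of elements of `G`. -/
noncomputable def evalWord {n : ℕ} (g : Fin n → G) :
    Monoid.Coprod G (FreeGroup (Fin n)) →* G :=
  Monoid.Coprod.lift (MonoidHom.id G) (FreeGroup.lift g)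

/-- The projection `G * F → F → F/[F,F]`. -/
noncomputable def toFreeAb (G : Type*) [Group G] (n : ℕ) :
    Monoid.Coprod G (FreeGroup (Fin n)) →* Abelianization (FreeGroup (Fin n)) :=
  Monoid.Coprod.lift 1 Abelianization.of

/-- An `R`-nullhomologous system of equations `xᵢ^e = wᵢ(x₁,…,xₙ)` over `G`. -/
structure NullSys (R : Subring ℚ) (G : Type*) [Group G] where
  n : ℕ
  e : ℕ
  he : e ∈ DR R
  w : Fin n → Monoid.Coprod G (FreeGroup (Fin n))
  nullh : ∀ i, toFreeAb G n (w i) = 1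

/-- A solution of a system of equations over `G`. -/
def NullSys.IsSolution {R : Subring ℚ} (S : NullSys R G) (g : Fin S.n → G) : Prop :=
  ∀ i, (g i) ^ S.e = evalWord g (S.w i)

/-- A group is `R`-closed if every `R`-nullhomologous system over it has a unique solution. -/
def IsRClosed (R : Subring ℚ) (A : Type*) [Group A] : Prop :=
  ∀ S : NullSys R A, ∃! g : Fin S.n → A, S.IsSolution g

/-- A normal subgroup `N ≤ G` is `R`-invisible if it is normally finitely generated and every
element of `N/[G,N]` has (finite) order lying in `D_R`. -/
def IsRInvisible (R : Subring ℚ) {G : Type*} [Group G] (N : Subgroup G) : Prop :=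
  N.Normal ∧
  (∃ s : Finset G, ↑s ⊆ (N : Set G) ∧ Subgroup.normalClosure ↑s = N) ∧
  ∀ x ∈ N, ∃ e ∈ DR R, x ^ e ∈ ⁅(⊤ : Subgroup G), N⁆

open scoped IsMulCommutative

/-- Key lemma: evaluating a nullhomologous word at `p·z` with `z` central gives the same
result as evaluating at `p`. -/
lemma key_eval {G : Type*} [Group G] {n : ℕ} {Q : Type*} [Group Q]
    (π0 : G →* Q) (p z : Fin n → Q) (hz : ∀ i, z i ∈ Subgroup.center Q)
    (u : Monoid.Coprod G (FreeGroup (Fin n))) (hu : toFreeAb G n u = 1) :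
    Monoid.Coprod.lift π0 (FreeGroup.lift (fun i => p i * z i)) u
      = Monoid.Coprod.lift π0 (FreeGroup.lift p) u := by
  set m : Abelianization (FreeGroup (Fin n)) →* Subgroup.center Q :=
    Abelianization.lift (FreeGroup.lift (fun i => (⟨z i, hz i⟩ : Subgroup.center Q))) with hm
  set L : Monoid.Coprod G (FreeGroup (Fin n)) →* Q :=
    Monoid.Coprod.lift π0 (FreeGroup.lift p) with hL
  have hcomm : ∀ (t : Abelianization (FreeGroup (Fin n))) (x : Q),
      (m t : Q) * x = x * (m t : Q) := by
    intro t x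
    exact (Subgroup.mem_center_iff.mp (m t).2 x).symm
  set Ψ : Monoid.Coprod G (FreeGroup (Fin n)) →* Q :=
    MonoidHom.mk' (fun u => L u * (m (toFreeAb G n u) : Q)) (by
      intro u v
      simp only [map_mul, Subgroup.coe_mul]
      calc L u * L v * ((m (toFreeAb G n u) : Q) * (m (toFreeAb G n v) : Q))
          = L u * ((m (toFreeAb G n u) : Q) * L v) * (m (toFreeAb G n v) : Q) := by
            rw [hcomm (toFreeAb G n u) (L v)]; group
        _ = L u * (m (toFreeAb G n u) : Q) * (L v * (m (toFreeAb G n v) : Q)) := by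
            group) with hΨ
  have hΨeq : Ψ = Monoid.Coprod.lift π0 (FreeGroup.lift (fun i => p i * z i)) := by
    apply Monoid.Coprod.hom_ext
    · ext g
      show L (Monoid.Coprod.inl g) * (m (toFreeAb G n (Monoid.Coprod.inl g)) : Q) = _
      simp [toFreeAb, hL, Monoid.Coprod.lift_apply_inl]
    · apply FreeGroup.ext_hom
      intro i
      show L (Monoid.Coprod.inr (FreeGroup.of i))
          * (m (toFreeAb G n (Monoid.Coprod.inr (FreeGroup.of i))) : Q) = _
      simp [toFreeAb, hL, hm, Monoid.Coprod.lift_apply_inr, Abelianization.lift_apply_of]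
  rw [← DFunLike.congr_fun hΨeq u]
  show L u * (m (toFreeAb G n u) : Q) = L u
  rw [hu, map_one]
  simp

open scoped commutatorElement

/-- If `G` has no nontrivial `R`-invisible subgroup, then every `R`-nullhomologous system
over `G` has at most one solution. -/
theorem unique_solution_of_no_invisible (R : Subring ℚ) {G : Type*} [Group G]
    (hG : ∀ N : Subgroup G, IsRInvisible R N → N = ⊥)
    (S : NullSys R G) (a b : Fin S.n → G)
    (ha : S.IsSolution a) (hb : S.IsSolution b) : a = b := by
  classical
  set c : Fin S.n → G := fun i => (a i)⁻¹ * b i with hc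
  set N : Subgroup G := Subgroup.normalClosure (Set.range c) with hN
  haveI hNnorm : N.Normal := Subgroup.normalClosure_normal
  set K : Subgroup G := ⁅(⊤ : Subgroup G), N⁆ with hK
  haveI hKnorm : K.Normal := Subgroup.commutator_normal ⊤ N
  set π : G →* G ⧸ K := QuotientGroup.mk' K with hπ
  have hcmem : ∀ i, c i ∈ N := fun i => Subgroup.subset_normalClosure ⟨i, rfl⟩
  have hcent : ∀ x ∈ N, π x ∈ Subgroup.center (G ⧸ K) := by
    intro x hx
    rw [Subgroup.mem_center_iff]
    intro q
    obtain ⟨g, rfl⟩ := QuotientGroup.mk'_surjective K q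
    have hKmem : ⁅g, x⁆ ∈ K := Subgroup.commutator_mem_commutator (Subgroup.mem_top g) hx
    have h1 : ⁅π g, π x⁆ = 1 := by
      rw [← map_commutatorElement]
      exact (QuotientGroup.eq_one_iff _).mpr hKmem
    exact (commutatorElement_eq_one_iff_commute.mp h1).eq
  have hab : ∀ i, b i = a i * c i := by
    intro i; rw [hc]; group
  have hcomp : ∀ (g : Fin S.n → G) (u : Monoid.Coprod G (FreeGroup (Fin S.n))),
      π (evalWord g u) = Monoid.Coprod.lift π (FreeGroup.lift (fun i => π (g i))) u := by
    intro g u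
    have : π.comp (evalWord g) = Monoid.Coprod.lift π (FreeGroup.lift (fun i => π (g i))) := by
      apply Monoid.Coprod.hom_ext
      · ext x
        simp [evalWord, Monoid.Coprod.lift_apply_inl]
      · apply FreeGroup.ext_hom; intro i
        simp [evalWord, Monoid.Coprod.lift_apply_inr]
    exact DFunLike.congr_fun this u
  -- each `π (c i)` is killed by `e` in the quotient
  have hce : ∀ i, (π (c i)) ^ S.e = 1 := by
    intro i
    have hzi : ∀ j, π (c j) ∈ Subgroup.center (G ⧸ K) := fun j => hcent _ (hcmem j)
    have h1 : π (b i ^ S.e) = π (a i ^ S.e) := by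
      rw [hb i, ha i, hcomp b, hcomp a]
      have hfun : (fun j => π (b j)) = fun j => π (a j) * π (c j) := by
        funext j; rw [hab j, map_mul]
      rw [hfun]
      exact key_eval π (fun j => π (a j)) (fun j => π (c j)) hzi (S.w i) (S.nullh i)
    have hcom : Commute (π (a i)) (π (c i)) :=
      (Subgroup.mem_center_iff.mp (hzi i) (π (a i)))
    have h2 : π (a i) ^ S.e * π (c i) ^ S.e = π (a i) ^ S.e := by
      rw [← hcom.mul_pow, ← map_mul, ← hab i, ← map_pow, h1, map_pow]
    calc π (c i) ^ S.e = (π (a i) ^ S.e)⁻¹ * (π (a i) ^ S.e * π (c i) ^ S.e) := by group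
      _ = 1 := by rw [h2]; group
  -- the subgroup of central elements killed by `e`
  set Hs : Subgroup (G ⧸ K) :=
    { carrier := {y | y ∈ Subgroup.center (G ⧸ K) ∧ y ^ S.e = 1}
      one_mem' := ⟨Subgroup.one_mem _, one_pow _⟩
      mul_mem' := by
        rintro x y ⟨hx1, hx2⟩ ⟨hy1, hy2⟩
        refine ⟨Subgroup.mul_mem _ hx1 hy1, ?_⟩
        have hcom : Commute x y := (Subgroup.mem_center_iff.mp hx1 y).symm
        rw [hcom.mul_pow, hx2, hy2, one_mul]
      inv_mem' := by
        rintro x ⟨hx1, hx2⟩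
        exact ⟨Subgroup.inv_mem _ hx1, by rw [inv_pow, hx2, inv_one]⟩ } with hHs
  haveI hHsnorm : Hs.Normal := by
    constructor
    intro x hx g
    have : g * x * g⁻¹ = x := by
      rw [Subgroup.mem_center_iff.mp hx.1 g]; group
    rw [this]; exact hx
  haveI : (Subgroup.comap π Hs).Normal := hHsnorm.comap π
  have hNle : N ≤ Subgroup.comap π Hs := by
    apply Subgroup.normalClosure_le_normal
    rintro x ⟨i, rfl⟩
    exact ⟨hcent _ (hcmem i), hce i⟩
  -- N is R-invisible
  have hInv : IsRInvisible R N := by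
    refine ⟨hNnorm, ⟨Finset.univ.image c, ?_, ?_⟩, ?_⟩
    · intro x hx
      simp only [Finset.coe_image, Finset.coe_univ, Set.image_univ] at hx
      obtain ⟨i, rfl⟩ := hx
      exact hcmem i
    · rw [Finset.coe_image, Finset.coe_univ, Set.image_univ]
    · intro x hx
      refine ⟨S.e, S.he, ?_⟩
      have hxH := hNle hx
      have : (π x) ^ S.e = 1 := hxH.2
      rw [← map_pow] at this
      exact (QuotientGroup.eq_one_iff _).mp this
  have hbot : N = ⊥ := hG N hInv
  funext i
  have : c i ∈ (⊥ : Subgroup G) := hbot ▸ hcmem i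
  have hc1 : c i = 1 := Subgroup.mem_bot.mp this
  have : (a i)⁻¹ * b i = 1 := hc1
  exact (inv_mul_eq_one.mp this)
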